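/- Let $c_1, c_2 > 0$ and $0 < \delta_1 < \delta_2 < 1$. Consider the scalar sequence defined by $w_{t+1} = (1 - c_1/(t+1)^{\delta_1}) w_t + c_2/(t+1)^{\delta_2}$ for $t \geq 0$ with arbitrary initial condition $w_0 \in \mathbb{R}$. Then for every $\delta_0$ with $0 \leq \delta_0 < \delta_2 - \delta_1$, we have $\lim_{t \to \infty} (t+1)^{\delta_0} w_t = 0$. -/

import Mathlib

open Filter Finset

private lemma aux_rpow_tendsto (p : ℝ) (hp : 0 < p) :
    Tendsto (fun t : ℕ => ((t : ℝ) + 1) ^ (-p)) atTop (nhds 0) :=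
  (tendsto_rpow_neg_atTop hp).comp
    (tendsto_atTop_add_const_right _ 1 tendsto_natCast_atTop_atTop)

private lemma decay_aux (a α β : ℕ → ℝ) (ha : ∀ t, 0 ≤ a t)
    (hαpos : ∀ t, 0 < α t)
    (hα1 : ∀ᶠ t in atTop, α t ≤ 1)
    (hrec : ∀ᶠ t in atTop, a (t + 1) ≤ (1 - α t) * a t + β t)
    (hdiv : ∀ T : ℕ, Tendsto (fun n => ∑ s ∈ Finset.Ico T n, α s) atTop atTop)
    (hβ : ∀ ε > (0 : ℝ), ∀ᶠ t in atTop, β t ≤ ε * α t) :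
    Tendsto a atTop (nhds 0) := by
  have main : ∀ ε > (0 : ℝ), ∀ᶠ t in atTop, a t < ε := by
    intro ε hε
    have hε2 : 0 < ε / 2 := by positivity
    obtain ⟨T, hT⟩ := eventually_atTop.1 ((hα1.and hrec).and (hβ (ε / 2) hε2))
    set b : ℕ → ℝ := fun t => max (a t - ε / 2) 0 with hbdef
    have hb0 : ∀ t, 0 ≤ b t := fun t => le_max_right _ _
    have hab : ∀ t, a t ≤ b t + ε / 2 := fun t =>
      sub_le_iff_le_add.1 (le_max_left _ _)
    have key : ∀ t, T ≤ t → b (t + 1) ≤ Real.exp (-α t) * b t := by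
      intro t ht
      obtain ⟨⟨h1, h2⟩, h3⟩ := hT t ht
      have hba : b (t + 1) ≤ (1 - α t) * b t := by
        apply max_le
        · have : a (t + 1) - ε / 2 ≤ (1 - α t) * (a t - ε / 2) := by nlinarith
          calc a (t + 1) - ε / 2 ≤ (1 - α t) * (a t - ε / 2) := this
            _ ≤ (1 - α t) * b t :=
              mul_le_mul_of_nonneg_left (le_max_left _ _) (by linarith)
        · exact mul_nonneg (by linarith) (hb0 t)
      calc b (t + 1) ≤ (1 - α t) * b t := hba
        _ ≤ Real.exp (-α t) * b t :=
          mul_le_mul_of_nonneg_right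
            (by linarith [Real.add_one_le_exp (-α t)]) (hb0 t)
    have iter : ∀ n, T ≤ n →
        b n ≤ Real.exp (-(∑ s ∈ Finset.Ico T n, α s)) * b T := by
      intro n hn
      induction n, hn using Nat.le_induction with
      | base => simp
      | succ n hn ih =>
        calc b (n + 1) ≤ Real.exp (-α n) * b n := key n hn
          _ ≤ Real.exp (-α n) * (Real.exp (-(∑ s ∈ Finset.Ico T n, α s)) * b T) :=
            mul_le_mul_of_nonneg_left ih (Real.exp_pos _).le
          _ = Real.exp (-(∑ s ∈ Finset.Ico T (n + 1), α s)) * b T := by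
            rw [← mul_assoc, ← Real.exp_add, Finset.sum_Ico_succ_top hn]
            ring_nf
    have hlim : Tendsto (fun n => Real.exp (-(∑ s ∈ Finset.Ico T n, α s)) * b T)
        atTop (nhds 0) := by
      have h1 : Tendsto (fun n => Real.exp (-(∑ s ∈ Finset.Ico T n, α s)))
          atTop (nhds 0) :=
        Real.tendsto_exp_atBot.comp (tendsto_neg_atTop_atBot.comp (hdiv T))
      simpa using h1.mul_const (b T)
    have hev : ∀ᶠ n in atTop,
        Real.exp (-(∑ s ∈ Finset.Ico T n, α s)) * b T < ε / 2 :=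
      hlim.eventually (gt_mem_nhds hε2)
    filter_upwards [hev, eventually_ge_atTop T] with n h1 h2
    have hbn : b n < ε / 2 := (iter n h2).trans_lt h1
    linarith [hab n]
  rw [Metric.tendsto_atTop]
  intro ε hε
  obtain ⟨N, hN⟩ := eventually_atTop.1 (main ε hε)
  exact ⟨N, fun n hn => by
    rw [Real.dist_eq, sub_zero, abs_of_nonneg (ha n)]; exact hN n hn⟩

private lemma aux_rpow_tendsto' (p : ℝ) (hp : 0 < p) :
    Tendsto (fun t : ℕ => ((t : ℝ) + 1) ^ (-p)) atTop (nhds 0) :=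
  (tendsto_rpow_neg_atTop hp).comp
    (tendsto_atTop_add_const_right _ 1 tendsto_natCast_atTop_atTop)

/-- Lemma 5 (Kar et al.): convergence of the scalar time-varying recursion
`w_{t+1} = (1 - c1/(t+1)^δ1) w_t + c2/(t+1)^δ2`. -/
theorem timeVaryingConvergence
    (c1 c2 δ1 δ2 : ℝ) (hc1 : 0 < c1) (hc2 : 0 < c2)
    (hδ1 : 0 < δ1) (hδ12 : δ1 < δ2) (hδ2 : δ2 < 1)
    (w : ℕ → ℝ)
    (hw : ∀ t : ℕ, w (t + 1) =
      (1 - c1 / ((t : ℝ) + 1) ^ δ1) * w t + c2 / ((t : ℝ) + 1) ^ δ2) :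
    ∀ δ0 : ℝ, 0 ≤ δ0 → δ0 < δ2 - δ1 →
      Filter.Tendsto (fun t : ℕ => ((t : ℝ) + 1) ^ δ0 * w t)
        Filter.atTop (nhds 0) := by
  intro δ0 hδ00 hδ0
  have hδ01 : δ0 ≤ 1 := by linarith
  have hδ11 : δ1 ≤ 1 := by linarith
  set a : ℕ → ℝ := fun t => ((t : ℝ) + 1) ^ δ0 * |w t| with hadef
  set α : ℕ → ℝ := fun t => (c1 / 2) * ((t : ℝ) + 1) ^ (-δ1) with hαdef
  set β : ℕ → ℝ := fun t => (2 * c2) * ((t : ℝ) + 1) ^ (δ0 - δ2) with hβdef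
  have hxpos : ∀ t : ℕ, (0:ℝ) < (t : ℝ) + 1 := fun t => by positivity
  have hx1 : ∀ t : ℕ, (1:ℝ) ≤ (t : ℝ) + 1 := fun t => by
    have : (0:ℝ) ≤ (t:ℝ) := Nat.cast_nonneg t; linarith
  have ha : ∀ t, 0 ≤ a t := fun t =>
    mul_nonneg (Real.rpow_nonneg (hxpos t).le _) (abs_nonneg _)
  have hαpos : ∀ t, 0 < α t := fun t =>
    mul_pos (half_pos hc1) (Real.rpow_pos_of_pos (hxpos t) _)
  -- α tends to 0
  have hαlim : Tendsto α atTop (nhds 0) := by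
    have := (aux_rpow_tendsto' δ1 hδ1).const_mul (c1 / 2)
    simpa [hαdef] using this
  have hα1 : ∀ᶠ t in atTop, α t ≤ 1 :=
    (hαlim.eventually (gt_mem_nhds one_pos)).mono fun t ht => ht.le
  -- E1 : c1 * x^{-δ1} ≤ 1/2
  have hE1 : ∀ᶠ (t : ℕ) in atTop, c1 * ((t : ℝ) + 1) ^ (-δ1) ≤ 1 / 2 := by
    have h0 : Tendsto (fun t : ℕ => c1 * ((t : ℝ) + 1) ^ (-δ1)) atTop (nhds 0) := by
      simpa using (aux_rpow_tendsto' δ1 hδ1).const_mul c1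
    exact (h0.eventually (gt_mem_nhds (by norm_num : (0:ℝ) < 1/2))).mono
      fun t ht => ht.le
  -- E2 : x^{δ1 - 1} ≤ c1/2
  have hE2 : ∀ᶠ (t : ℕ) in atTop, ((t : ℝ) + 1) ^ (δ1 - 1) ≤ c1 / 2 := by
    have h := (aux_rpow_tendsto' (1 - δ1) (by linarith)).eventually
      (gt_mem_nhds (half_pos hc1))
    refine h.mono fun t ht => ?_
    have : -(1 - δ1) = δ1 - 1 := by ring
    rw [this] at ht; exact ht.le
  -- recursion bound
  have hrec : ∀ᶠ t in atTop, a (t + 1) ≤ (1 - α t) * a t + β t := by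
    filter_upwards [hE1, hE2] with t h1 h2
    set x : ℝ := (t : ℝ) + 1 with hxdef
    have hx0 : (0:ℝ) < x := hxpos t
    have hx1' : (1:ℝ) ≤ x := hx1 t
    have hY : (0:ℝ) < x ^ (-δ1) := Real.rpow_pos_of_pos hx0 _
    have hrw : c1 / x ^ δ1 = c1 * x ^ (-δ1) := by
      rw [Real.rpow_neg hx0.le, div_eq_mul_inv]
    -- |w (t+1)| bound
    have hr1 : c1 * x ^ (-δ1) ≤ 1 / 2 := h1
    have habs : |w (t + 1)| ≤ (1 - c1 * x ^ (-δ1)) * |w t| + c2 / x ^ δ2 := by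
      rw [hw t, ← hxdef, hrw]
      have h2pos : (0:ℝ) ≤ c2 / x ^ δ2 := by positivity
      calc |(1 - c1 * x ^ (-δ1)) * w t + c2 / x ^ δ2|
          ≤ |(1 - c1 * x ^ (-δ1)) * w t| + |c2 / x ^ δ2| := abs_add_le _ _
        _ = (1 - c1 * x ^ (-δ1)) * |w t| + c2 / x ^ δ2 := by
            rw [abs_mul, abs_of_nonneg (by linarith), abs_of_nonneg h2pos]
    -- a (t+1) = (x+1)^δ0 * |w (t+1)|
    have hacast : a (t + 1) = (x + 1) ^ δ0 * |w (t + 1)| := by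
      simp only [hadef]; push_cast; ring_nf
      rw [hxdef]; ring_nf
    have hxp1 : (0:ℝ) < x + 1 := by linarith
    -- B1 : (x+1)^δ0 ≤ (1 + 1/x) * x^δ0
    have hB1 : (x + 1) ^ δ0 ≤ (1 + 1/x) * x ^ δ0 := by
      have hxeq : x + 1 = (1 + 1/x) * x := by field_simp
      rw [hxeq, Real.mul_rpow (by positivity) hx0.le]
      have : (1 + 1/x) ^ δ0 ≤ (1 + 1/x) := by
        have := Real.rpow_le_rpow_of_exponent_le
          (by nlinarith [one_div_pos.2 hx0] : (1:ℝ) ≤ 1 + 1/x) hδ01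
        simpa using this
      exact mul_le_mul_of_nonneg_right this (Real.rpow_nonneg hx0.le _)
    -- B2 : (x+1)^δ0 * (c2 / x^δ2) ≤ β t
    have hB2 : (x + 1) ^ δ0 * (c2 / x ^ δ2) ≤ β t := by
      have hb : (x + 1) ^ δ0 ≤ 2 * x ^ δ0 := by
        calc (x + 1) ^ δ0 ≤ (2 * x) ^ δ0 :=
              Real.rpow_le_rpow (by linarith) (by linarith) hδ00
          _ = 2 ^ δ0 * x ^ δ0 := Real.mul_rpow (by norm_num) hx0.le
          _ ≤ 2 * x ^ δ0 := by
              have h2 : (2:ℝ) ^ δ0 ≤ 2 ^ (1:ℝ) :=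
                Real.rpow_le_rpow_of_exponent_le (by norm_num) hδ01
              have := Real.rpow_one (2:ℝ)
              nlinarith [Real.rpow_nonneg hx0.le δ0]
      have hc2x : (0:ℝ) ≤ c2 / x ^ δ2 := by positivity
      calc (x + 1) ^ δ0 * (c2 / x ^ δ2) ≤ 2 * x ^ δ0 * (c2 / x ^ δ2) :=
            mul_le_mul_of_nonneg_right hb hc2x
        _ = (2 * c2) * x ^ (δ0 - δ2) := by
            rw [show δ0 - δ2 = δ0 + (-δ2) by ring, Real.rpow_add hx0,
              Real.rpow_neg hx0.le, div_eq_mul_inv]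
            ring
        _ = β t := by simp [hβdef, hxdef]
    -- contraction factor
    have h1x : 1/x ≤ (c1 / 2) * x ^ (-δ1) := by
      have := mul_le_mul_of_nonneg_right h2 hY.le
      rw [← Real.rpow_add hx0] at this
      have he : δ1 - 1 + -δ1 = -1 := by ring
      rw [he, Real.rpow_neg_one, inv_eq_one_div] at this
      exact this
    have hcontr : (1 - c1 * x ^ (-δ1)) * (1 + 1/x) ≤ 1 - α t := by
      have hαt : α t = (c1 / 2) * x ^ (-δ1) := rfl
      rw [hαt]
      have hprod : 0 ≤ c1 * x ^ (-δ1) * (1/x) := by positivity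
      nlinarith [hY, one_div_pos.2 hx0]
    -- combine
    have step : a (t + 1) ≤
        (1 - c1 * x ^ (-δ1)) * ((x + 1) ^ δ0 * |w t|) + (x + 1) ^ δ0 * (c2 / x ^ δ2) := by
      rw [hacast]
      calc (x + 1) ^ δ0 * |w (t + 1)|
          ≤ (x + 1) ^ δ0 * ((1 - c1 * x ^ (-δ1)) * |w t| + c2 / x ^ δ2) :=
            mul_le_mul_of_nonneg_left habs (Real.rpow_nonneg hxp1.le _)
        _ = _ := by ring
    have hat : a t = x ^ δ0 * |w t| := rfl
    have step2 : (1 - c1 * x ^ (-δ1)) * ((x + 1) ^ δ0 * |w t|) ≤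
        (1 - c1 * x ^ (-δ1)) * (1 + 1/x) * a t := by
      rw [hat, mul_assoc]
      refine mul_le_mul_of_nonneg_left ?_ (by linarith)
      calc (x + 1) ^ δ0 * |w t| ≤ ((1 + 1/x) * x ^ δ0) * |w t| :=
            mul_le_mul_of_nonneg_right hB1 (abs_nonneg _)
        _ = (1 + 1/x) * (x ^ δ0 * |w t|) := by ring
    have step3 : (1 - c1 * x ^ (-δ1)) * (1 + 1/x) * a t ≤ (1 - α t) * a t :=
      mul_le_mul_of_nonneg_right hcontr (ha t)
    linarith
  -- divergence of tail sums of α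
  have hdiv : ∀ T : ℕ, Tendsto (fun n => ∑ s ∈ Finset.Ico T n, α s) atTop atTop := by
    intro T
    have hH := Real.tendsto_sum_range_one_div_nat_succ_atTop
    have base : Tendsto
        (fun n => (c1 / 2) * ((∑ i ∈ range n, 1 / ((i:ℝ) + 1))
          + -(∑ i ∈ range T, 1 / ((i:ℝ) + 1)))) atTop atTop :=
      (tendsto_atTop_add_const_right _ _ hH).const_mul_atTop (half_pos hc1)
    apply tendsto_atTop_mono' atTop ?_ base
    filter_upwards [eventually_ge_atTop T] with n hn
    have hsub : ∑ s ∈ Finset.Ico T n, (1 / ((s:ℝ) + 1)) =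
        (∑ i ∈ range n, 1 / ((i:ℝ) + 1)) - (∑ i ∈ range T, 1 / ((i:ℝ) + 1)) :=
      Finset.sum_Ico_eq_sub _ hn
    have hterm : ∀ s ∈ Finset.Ico T n, (c1 / 2) * (1 / ((s:ℝ) + 1)) ≤ α s := by
      intro s _
      have h1 : ((s:ℝ) + 1) ^ (-1 : ℝ) ≤ ((s:ℝ) + 1) ^ (-δ1) :=
        Real.rpow_le_rpow_of_exponent_le (hx1 s) (by linarith)
      have h2 : ((s:ℝ) + 1) ^ (-1 : ℝ) = 1 / ((s:ℝ) + 1) := by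
        rw [Real.rpow_neg_one, inv_eq_one_div]
      have := mul_le_mul_of_nonneg_left h1 (half_pos hc1).le
      rw [h2] at this
      simpa [hαdef] using this
    calc (c1 / 2) * ((∑ i ∈ range n, 1 / ((i:ℝ) + 1))
          + -(∑ i ∈ range T, 1 / ((i:ℝ) + 1)))
        = ∑ s ∈ Finset.Ico T n, (c1 / 2) * (1 / ((s:ℝ) + 1)) := by
          rw [← Finset.mul_sum, hsub]; ring
      _ ≤ ∑ s ∈ Finset.Ico T n, α s := Finset.sum_le_sum hterm
  -- β is small relative to α
  have hβα : ∀ ε > (0:ℝ), ∀ᶠ t in atTop, β t ≤ ε * α t := by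
    intro ε hε
    have hexp : 0 < δ2 - δ0 - δ1 := by linarith
    have hbd : 0 < ε * c1 / (4 * c2) := by positivity
    have h0 := (aux_rpow_tendsto' (δ2 - δ0 - δ1) hexp).eventually (gt_mem_nhds hbd)
    refine h0.mono fun t ht => ?_
    have hxx : (0:ℝ) < (t:ℝ) + 1 := hxpos t
    have hYpos : (0:ℝ) < ((t:ℝ) + 1) ^ (-δ1) := Real.rpow_pos_of_pos hxx _
    have hsplit : ((t:ℝ) + 1) ^ (δ0 - δ2) =
        ((t:ℝ) + 1) ^ (-(δ2 - δ0 - δ1)) * ((t:ℝ) + 1) ^ (-δ1) := by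
      rw [← Real.rpow_add hxx]; ring_nf
    have ht' : ((t:ℝ) + 1) ^ (-(δ2 - δ0 - δ1)) ≤ ε * c1 / (4 * c2) := ht.le
    have hXpos : (0:ℝ) < ((t:ℝ) + 1) ^ (-(δ2 - δ0 - δ1)) := Real.rpow_pos_of_pos hxx _
    show (2 * c2) * ((t:ℝ) + 1) ^ (δ0 - δ2) ≤ ε * ((c1 / 2) * ((t:ℝ) + 1) ^ (-δ1))
    rw [hsplit]
    have : (2 * c2) * (((t:ℝ) + 1) ^ (-(δ2 - δ0 - δ1)) * ((t:ℝ) + 1) ^ (-δ1)) ≤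
        (2 * c2) * ((ε * c1 / (4 * c2)) * ((t:ℝ) + 1) ^ (-δ1)) := by
      apply mul_le_mul_of_nonneg_left _ (by positivity)
      exact mul_le_mul_of_nonneg_right ht' hYpos.le
    calc (2 * c2) * (((t:ℝ) + 1) ^ (-(δ2 - δ0 - δ1)) * ((t:ℝ) + 1) ^ (-δ1)) ≤
        (2 * c2) * ((ε * c1 / (4 * c2)) * ((t:ℝ) + 1) ^ (-δ1)) := this
      _ = ε * ((c1 / 2) * ((t:ℝ) + 1) ^ (-δ1)) := by field_simp; ring
  have hA : Tendsto a atTop (nhds 0) := decay_aux a α β ha hαpos hα1 hrec hdiv hβα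
  apply squeeze_zero_norm _ hA
  intro t
  have : ‖((t:ℝ) + 1) ^ δ0 * w t‖ = a t := by
    rw [Real.norm_eq_abs, abs_mul, abs_of_pos (Real.rpow_pos_of_pos (hxpos t) δ0)]
  exact this.le
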